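/- Let p, q be unit quaternions and let Z = (U,V), Z′ = (U′,V′) be tangent vectors to S³×S³ at (p,q). Then ½(⟨Z,Z′⟩ + ⟨JZ,JZ′⟩) = (4/3)(⟨U,U′⟩ + ⟨V,V′⟩) − (2/3)(⟨p⁻¹U, q⁻¹V′⟩ + ⟨p⁻¹U′, q⁻¹V⟩). -/

import Mathlib

noncomputable section

open Quaternion

/-- Euclidean inner product on the quaternions: `⟨x,y⟩ = Re (x * star y)`. -/
def ipQ (x y : ℍ[ℝ]) : ℝ := (x * star y).re

/-- Euclidean inner product on pairs of quaternions. -/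
def ip2Q (Z W : ℍ[ℝ] × ℍ[ℝ]) : ℝ := ipQ Z.1 W.1 + ipQ Z.2 W.2

/-- The almost complex structure `J` of the nearly Kähler `S³ × S³` at `(p,q)`:
`J(U,V) = (1/√3)(2pq⁻¹V − U, −2qp⁻¹U + V)`. -/
def Jmap (p q : ℍ[ℝ]) (Z : ℍ[ℝ] × ℍ[ℝ]) : ℍ[ℝ] × ℍ[ℝ] :=
  ((Real.sqrt 3)⁻¹ • ((2 : ℝ) • (p * q⁻¹ * Z.2) - Z.1),
   (Real.sqrt 3)⁻¹ • (-((2 : ℝ) • (q * p⁻¹ * Z.1)) + Z.2))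

/-- The nearly Kähler metric `g(Z,Z') = ½(⟨Z,Z'⟩ + ⟨JZ,JZ'⟩)`. -/
def gmet (p q : ℍ[ℝ]) (Z W : ℍ[ℝ] × ℍ[ℝ]) : ℝ :=
  (1 / 2) * (ip2Q Z W + ip2Q (Jmap p q Z) (Jmap p q W))

/-- The almost product structure `P(U,V) = (pq⁻¹V, qp⁻¹U)`. -/
def Pmap (p q : ℍ[ℝ]) (Z : ℍ[ℝ] × ℍ[ℝ]) : ℍ[ℝ] × ℍ[ℝ] :=
  (p * q⁻¹ * Z.2, q * p⁻¹ * Z.1)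

/-- The usual product structure `Q(U,V) = (−U, V)`. -/
def Qmap (Z : ℍ[ℝ] × ℍ[ℝ]) : ℍ[ℝ] × ℍ[ℝ] := (-Z.1, Z.2)

/-- Cross product of (imaginary) quaternions: `α × β = ½(αβ − βα)`. -/
def crossQ (a b : ℍ[ℝ]) : ℍ[ℝ] := (1 / 2 : ℝ) • (a * b - b * a)

/-- The tensor `G = ∇̃J` at `(p,q)`, evaluated on tangent vectors `X = (pα, qβ)`,
`Y = (pγ, qδ)` (so `α = p⁻¹X₁`, etc.):
`G(X,Y) = (2/(3√3))(p(β×γ + α×δ + α×γ − 2β×δ), q(−α×δ − β×γ + 2α×γ − β×δ))`. -/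
def Gmap (p q : ℍ[ℝ]) (X Y : ℍ[ℝ] × ℍ[ℝ]) : ℍ[ℝ] × ℍ[ℝ] :=
  (2 / (3 * Real.sqrt 3) : ℝ) •
    ((p * (crossQ (q⁻¹ * X.2) (p⁻¹ * Y.1) + crossQ (p⁻¹ * X.1) (q⁻¹ * Y.2)
        + crossQ (p⁻¹ * X.1) (p⁻¹ * Y.1) - (2 : ℝ) • crossQ (q⁻¹ * X.2) (q⁻¹ * Y.2)),
      q * (-(crossQ (p⁻¹ * X.1) (q⁻¹ * Y.2)) - crossQ (q⁻¹ * X.2) (p⁻¹ * Y.1)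
        + (2 : ℝ) • crossQ (p⁻¹ * X.1) (p⁻¹ * Y.1) - crossQ (q⁻¹ * X.2) (q⁻¹ * Y.2))))

lemma re_mul_comm (a b : ℍ[ℝ]) : (a * b).re = (b * a).re := by
  simp [Quaternion.re_mul]; ring

lemma ipQ_comm (x y : ℍ[ℝ]) : ipQ x y = ipQ y x := by
  unfold ipQ
  have : y * star x = star (x * star y) := by simp [star_mul]
  rw [this, Quaternion.re_star]

lemma ipQ_add_left (x y z : ℍ[ℝ]) : ipQ (x + y) z = ipQ x z + ipQ y z := by
  simp [ipQ, add_mul]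

lemma ipQ_add_right (x y z : ℍ[ℝ]) : ipQ x (y + z) = ipQ x y + ipQ x z := by
  simp [ipQ, mul_add]

lemma ipQ_sub_left (x y z : ℍ[ℝ]) : ipQ (x - y) z = ipQ x z - ipQ y z := by
  simp [ipQ, sub_mul]

lemma ipQ_sub_right (x y z : ℍ[ℝ]) : ipQ x (y - z) = ipQ x y - ipQ x z := by
  simp [ipQ, mul_sub]

lemma ipQ_neg_left (x y : ℍ[ℝ]) : ipQ (-x) y = - ipQ x y := by
  simp [ipQ]

lemma ipQ_neg_right (x y : ℍ[ℝ]) : ipQ x (-y) = - ipQ x y := by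
  simp [ipQ]

lemma ipQ_smul_left (r : ℝ) (x y : ℍ[ℝ]) : ipQ (r • x) y = r * ipQ x y := by
  simp [ipQ, smul_mul_assoc]

lemma ipQ_smul_right (r : ℝ) (x y : ℍ[ℝ]) : ipQ x (r • y) = r * ipQ x y := by
  simp [ipQ, mul_smul_comm]

lemma ipQ_mul_mul (a x y : ℍ[ℝ]) : ipQ (a * x) (a * y) = normSq a * ipQ x y := by
  unfold ipQ
  rw [star_mul, show a * x * (star y * star a) = a * (x * star y * star a) by
      rw [mul_assoc, mul_assoc],
    re_mul_comm, mul_assoc, Quaternion.star_mul_self, re_mul_comm,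
    Quaternion.coe_mul_eq_smul]
  simp

lemma ipQ_star_mul_left (a x y : ℍ[ℝ]) : ipQ (star a * x) y = ipQ x (a * y) := by
  unfold ipQ
  rw [mul_assoc, re_mul_comm, star_mul, mul_assoc]

lemma ipQ_mul_left (a x y : ℍ[ℝ]) : ipQ (a * x) y = ipQ x (star a * y) := by
  have := ipQ_star_mul_left (star a) x y
  rwa [star_star] at this

/-- the nearly Kähler metric in terms of the Euclidean product metric. -/
theorem stmt1 (p q : ℍ[ℝ]) (hp : ‖p‖ = 1) (hq : ‖q‖ = 1)
    (Z Z' : ℍ[ℝ] × ℍ[ℝ]) (hZ1 : ipQ Z.1 p = 0) (hZ2 : ipQ Z.2 q = 0)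
    (hZ'1 : ipQ Z'.1 p = 0) (hZ'2 : ipQ Z'.2 q = 0) :
    gmet p q Z Z' =
      (4 / 3) * (ipQ Z.1 Z'.1 + ipQ Z.2 Z'.2)
        - (2 / 3) * (ipQ (p⁻¹ * Z.1) (q⁻¹ * Z'.2) + ipQ (p⁻¹ * Z'.1) (q⁻¹ * Z.2)) := by
  have hps : normSq p = 1 := by
    rw [Quaternion.normSq_eq_norm_mul_self, hp]; norm_num
  have hqs : normSq q = 1 := by
    rw [Quaternion.normSq_eq_norm_mul_self, hq]; norm_num
  have hpinv : p⁻¹ = star p := by rw [Quaternion.inv_def, hps]; simp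
  have hqinv : q⁻¹ = star q := by rw [Quaternion.inv_def, hqs]; simp
  have ht : (Real.sqrt 3)⁻¹ * (Real.sqrt 3)⁻¹ = 1/3 := by
    rw [← mul_inv, Real.mul_self_sqrt (by norm_num : (0:ℝ) ≤ 3)]
    norm_num
  have h1 : ipQ (p * star q * Z.2) (p * star q * Z'.2) = ipQ Z.2 Z'.2 := by
    rw [ipQ_mul_mul]
    simp [map_mul normSq, Quaternion.normSq_star, hps, hqs]
  have h2 : ipQ (p * star q * Z.2) Z'.1 = ipQ (star p * Z'.1) (star q * Z.2) := by
    rw [mul_assoc, ipQ_mul_left, ipQ_comm]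
  have h3 : ipQ Z.1 (p * star q * Z'.2) = ipQ (star p * Z.1) (star q * Z'.2) := by
    rw [ipQ_comm, mul_assoc, ipQ_mul_left, ipQ_comm]
  have h4 : ipQ (q * star p * Z.1) (q * star p * Z'.1) = ipQ Z.1 Z'.1 := by
    rw [ipQ_mul_mul]
    simp [map_mul normSq, Quaternion.normSq_star, hps, hqs]
  have h5 : ipQ (q * star p * Z.1) Z'.2 = ipQ (star p * Z.1) (star q * Z'.2) := by
    rw [mul_assoc, ipQ_mul_left]
  have h6 : ipQ Z.2 (q * star p * Z'.1) = ipQ (star p * Z'.1) (star q * Z.2) := by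
    rw [ipQ_comm, mul_assoc, ipQ_mul_left]
  simp only [gmet, ip2Q, Jmap, hpinv, hqinv, ipQ_smul_left, ipQ_smul_right, ipQ_sub_left,
    ipQ_sub_right, ipQ_add_left, ipQ_add_right, ipQ_neg_left, ipQ_neg_right]
  rw [h1, h2, h3, h4, h5, h6]
  linear_combination ((5 * ipQ Z.1 Z'.1 + 5 * ipQ Z.2 Z'.2
    - 4 * ipQ (star p * Z.1) (star q * Z'.2)
    - 4 * ipQ (star p * Z'.1) (star q * Z.2)) / 2) * ht
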